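/- Let T be a tree on a finite nonempty vertex type V with n = |V| vertices, and let m ≥ 1 be an integer. Let G be the m-order T-fractal graph of T. Then the Wiener index of G satisfies W(G) = 2(m+2)^2·W(T) − (m+2)·n^2 − (m−1)(m+2)·n + m^2 + 2m. -/

import Mathlib

/-- The Wiener index of a finite simple graph: half the sum of the graph
distances over all ordered pairs of vertices. -/
noncomputable def wienerIndex {V : Type*} [Fintype V] (G : SimpleGraph V) : ℚ :=
  (∑ u : V, ∑ v : V, (G.dist u v : ℚ)) / 2

/-- The `m`-order T-fractal graph of `T`: insert one midpoint vertex on every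
edge of `T` and attach `m` pendant leaves to each midpoint. -/
def tFractal {V : Type*} (T : SimpleGraph V) (m : ℕ) :
    SimpleGraph (V ⊕ (T.edgeSet ⊕ (T.edgeSet × Fin m))) :=
  SimpleGraph.fromRel (fun x y =>
    match x, y with
    | Sum.inl u, Sum.inr (Sum.inl e) => u ∈ e.1
    | Sum.inr (Sum.inl e), Sum.inr (Sum.inr (e', _)) => e = e'
    | _, _ => False)

open SimpleGraph Sum Finset

namespace TFaux

set_option linter.unusedSectionVars false

variable {V : Type*} [DecidableEq V] {T : SimpleGraph V}

lemma dist_adj_le {a b : V} (hc : T.Connected) (h : T.Adj a b) (u : V) :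
    T.dist u b ≤ T.dist u a + 1 := by
  have := hc.dist_triangle (u := u) (v := a) (w := b)
  have h1 : T.dist a b = 1 := by rw [dist_eq_one_iff_adj]; exact h
  omega

lemma not_mem_shortest {u a b : V} (p : T.Walk u a)
    (h : p.length < T.dist u b + T.dist b a) : b ∉ p.support := by
  intro hb
  have h1 : (p.takeUntil b hb).length + (p.dropUntil b hb).length = p.length := by
    rw [← SimpleGraph.Walk.length_append, SimpleGraph.Walk.take_spec]
  have h2 : T.dist u b ≤ (p.takeUntil b hb).length := dist_le _
  have h3 : T.dist b a ≤ (p.dropUntil b hb).length := dist_le _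
  omega

/-- In a tree, the two endpoints of an edge have different distances to any vertex. -/
lemma tree_dist_ne (hT : T.IsTree) {a b : V} (h : T.Adj a b) (u : V) :
    T.dist u a ≠ T.dist u b := by
  intro heq
  obtain ⟨p, hp, hl⟩ := hT.isConnected.exists_path_of_dist u a
  have hba : T.dist b a = 1 := by rw [dist_eq_one_iff_adj]; exact h.symm
  have hbp : b ∉ p.support := by
    apply not_mem_shortest p; omega
  have hp' : (p.concat h).IsPath := by
    rw [← SimpleGraph.Walk.isPath_reverse_iff, SimpleGraph.Walk.reverse_concat]
    exact SimpleGraph.Walk.IsPath.cons (by rwa [SimpleGraph.Walk.isPath_reverse_iff])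
      (by rwa [SimpleGraph.Walk.support_reverse, List.mem_reverse])
  obtain ⟨q, hq, hql⟩ := hT.isConnected.exists_path_of_dist u b
  have := hT.IsAcyclic.path_unique ⟨p.concat h, hp'⟩ ⟨q, hq⟩
  have hlen : (p.concat h).length = q.length := by rw [Subtype.mk_eq_mk.mp this]
  rw [SimpleGraph.Walk.length_concat] at hlen
  omega

lemma exists_parent (hT : T.IsTree) {u v : V} (h : v ≠ u) :
    ∃ w, T.Adj w v ∧ T.dist u w + 1 = T.dist u v := by
  have hd : T.dist u v ≠ 0 := by
    have := hT.isConnected.pos_dist_of_ne (Ne.symm h)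
    omega
  obtain ⟨p, hl⟩ := (hT.isConnected u v).exists_walk_length_eq_dist
  cases hpr : p.reverse with
  | nil => simp at hd
  | @cons _ w _ hadj p' =>
    refine ⟨w, hadj.symm, ?_⟩
    have hlen : p.reverse.length = T.dist u v := by
      rwa [SimpleGraph.Walk.length_reverse]
    rw [hpr] at hlen
    simp only [SimpleGraph.Walk.length_cons] at hlen
    have h1 : T.dist u w ≤ p'.reverse.length := dist_le _
    rw [SimpleGraph.Walk.length_reverse] at h1
    have h2 : T.dist u v ≤ T.dist u w + 1 := dist_adj_le hT.isConnected hadj.symm u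
    omega

lemma parent_unique (hT : T.IsTree) {u v w w' : V}
    (hw : T.Adj w v) (hd : T.dist u w + 1 = T.dist u v)
    (hw' : T.Adj w' v) (hd' : T.dist u w' + 1 = T.dist u v) : w = w' := by
  obtain ⟨p, hp, hl⟩ := hT.isConnected.exists_path_of_dist u w
  obtain ⟨p', hp', hl'⟩ := hT.isConnected.exists_path_of_dist u w'
  have hvp : v ∉ p.support := not_mem_shortest p (by omega)
  have hvp' : v ∉ p'.support := not_mem_shortest p' (by omega)
  have hc : (p.concat hw).IsPath := by
    rw [← SimpleGraph.Walk.isPath_reverse_iff, SimpleGraph.Walk.reverse_concat]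
    exact SimpleGraph.Walk.IsPath.cons (by rwa [SimpleGraph.Walk.isPath_reverse_iff])
      (by rwa [SimpleGraph.Walk.support_reverse, List.mem_reverse])
  have hc' : (p'.concat hw').IsPath := by
    rw [← SimpleGraph.Walk.isPath_reverse_iff, SimpleGraph.Walk.reverse_concat]
    exact SimpleGraph.Walk.IsPath.cons (by rwa [SimpleGraph.Walk.isPath_reverse_iff])
      (by rwa [SimpleGraph.Walk.support_reverse, List.mem_reverse])
  have := hT.IsAcyclic.path_unique ⟨p.concat hw, hc⟩ ⟨p'.concat hw', hc'⟩
  have heq : p.concat hw = p'.concat hw' := Subtype.mk_eq_mk.mp this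
  obtain ⟨hv, -⟩ := SimpleGraph.Walk.concat_inj heq
  exact hv


/-- minimum distance from `u` to an endpoint of `s`. -/
noncomputable def md (T : SimpleGraph V) (u : V) : Sym2 V → ℕ :=
  Sym2.lift ⟨fun a b => min (T.dist u a) (T.dist u b), fun _ _ => min_comm _ _⟩

@[simp] lemma md_mk {u a b : V} : md T u s(a, b) = min (T.dist u a) (T.dist u b) := rfl

/-- minimum over endpoints of `s` of `md · t`. -/
noncomputable def Md (T : SimpleGraph V) (s t : Sym2 V) : ℕ :=
  Sym2.lift ⟨fun a b => min (md T a t) (md T b t), fun _ _ => min_comm _ _⟩ s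

@[simp] lemma Md_mk {a b : V} {t : Sym2 V} :
    Md T s(a, b) t = min (md T a t) (md T b t) := rfl

lemma md_le_of_mem {u x : V} {s : Sym2 V} (hx : x ∈ s) : md T u s ≤ T.dist u x := by
  induction s using Sym2.ind with
  | _ a b =>
    rw [Sym2.mem_iff] at hx
    rcases hx with rfl | rfl <;> simp [min_le_left, min_le_right]

lemma exists_md {u : V} (s : Sym2 V) : ∃ x ∈ s, md T u s = T.dist u x := by
  induction s using Sym2.ind with
  | _ a b =>
    rcases le_total (T.dist u a) (T.dist u b) with h | h
    · exact ⟨a, by simp, by simp [min_eq_left h]⟩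
    · exact ⟨b, by simp [Sym2.mem_iff], by simp [min_eq_right h]⟩

lemma md_eq_zero_of_mem {u : V} {s : Sym2 V} (hu : u ∈ s) : md T u s = 0 := by
  have := md_le_of_mem (T := T) (u := u) hu
  rw [SimpleGraph.dist_self] at this; omega

lemma md_adj {a b : V} (hc : T.Connected) (h : T.Adj a b) (s : Sym2 V) :
    md T a s ≤ md T b s + 1 := by
  induction s using Sym2.ind with
  | _ c d =>
    have h1 := dist_adj_le hc h.symm c
    have h2 := dist_adj_le hc h.symm d
    have e1 : T.dist a c = T.dist c a := SimpleGraph.dist_comm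
    have e2 : T.dist a d = T.dist d a := SimpleGraph.dist_comm
    have e3 : T.dist b c = T.dist c b := SimpleGraph.dist_comm
    have e4 : T.dist b d = T.dist d b := SimpleGraph.dist_comm
    simp only [md_mk]
    omega

lemma dist_le_md_add_one {u x : V} {s : Sym2 V} (hc : T.Connected)
    (hs : s ∈ T.edgeSet) (hx : x ∈ s) : T.dist u x ≤ md T u s + 1 := by
  induction s using Sym2.ind with
  | _ a b =>
    have hadj : T.Adj a b := hs
    have h1 := dist_adj_le hc hadj u
    have h2 := dist_adj_le hc hadj.symm u
    rw [Sym2.mem_iff] at hx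
    simp only [md_mk]
    rcases hx with rfl | rfl <;> omega

lemma Md_le_of_mem {x : V} {s t : Sym2 V} (hx : x ∈ s) : Md T s t ≤ md T x t := by
  induction s using Sym2.ind with
  | _ a b =>
    rw [Sym2.mem_iff] at hx
    rcases hx with rfl | rfl <;> simp [min_le_left, min_le_right]

lemma exists_Md (s t : Sym2 V) : ∃ x ∈ s, Md T s t = md T x t := by
  induction s using Sym2.ind with
  | _ a b =>
    rcases le_total (md T a t) (md T b t) with h | h
    · exact ⟨a, by simp, by simp [min_eq_left h]⟩
    · exact ⟨b, by simp [Sym2.mem_iff], by simp [min_eq_right h]⟩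

lemma md_le_Md_add_one {x : V} {s t : Sym2 V} (hc : T.Connected)
    (hs : s ∈ T.edgeSet) (hx : x ∈ s) : md T x t ≤ Md T s t + 1 := by
  induction s using Sym2.ind with
  | _ a b =>
    have hadj : T.Adj a b := hs
    have h1 := md_adj hc hadj t
    have h2 := md_adj hc hadj.symm t
    rw [Sym2.mem_iff] at hx
    simp only [Md_mk]
    rcases hx with rfl | rfl <;> omega

lemma Md_comm (hc : T.Connected) (s t : Sym2 V) : Md T s t = Md T t s := by
  induction s using Sym2.ind with
  | _ a b =>
    induction t using Sym2.ind with
    | _ c d =>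
      simp only [Md_mk, md_mk]
      have e1 : T.dist a c = T.dist c a := SimpleGraph.dist_comm
      have e2 : T.dist a d = T.dist d a := SimpleGraph.dist_comm
      have e3 : T.dist b c = T.dist c b := SimpleGraph.dist_comm
      have e4 : T.dist b d = T.dist d b := SimpleGraph.dist_comm
      omega

/-- parity: the distances from `x` to the two endpoints of an edge differ by one. -/
lemma md_parity (hT : T.IsTree) {a b : V} (he : T.Adj a b) (x : V) :
    2 * md T x s(a, b) + 1 = T.dist x a + T.dist x b := by
  have h1 := tree_dist_ne hT he x
  have h2 := dist_adj_le hT.isConnected he x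
  have h3 := dist_adj_le hT.isConnected he.symm x
  simp only [md_mk]
  omega


/-- Key claim: if `s(a,b)` and `f` are distinct edges of a tree, the `md`-distances
from `a` and from `b` to `f` differ. -/
lemma md_ne (hT : T.IsTree) {a b : V} (he : T.Adj a b) {f : Sym2 V}
    (hf : f ∈ T.edgeSet) (hef : s(a, b) ≠ f) : md T a f ≠ md T b f := by
  intro heq
  obtain ⟨x, hxf, hx⟩ := exists_md (T := T) (u := a) f
  obtain ⟨y, hyf, hy⟩ := exists_md (T := T) (u := b) f
  set q := md T a f with hq
  -- all endpoints of f are at distance ≥ q from both a and b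
  have hqa : ∀ z ∈ f, q ≤ T.dist a z := by
    intro z hz; rw [hq]; exact md_le_of_mem hz
  have hqb : ∀ z ∈ f, q ≤ T.dist b z := by
    intro z hz; rw [heq]; exact md_le_of_mem hz
  have hab1 : T.dist a b = 1 := by rw [dist_eq_one_iff_adj]; exact he
  have hba1 : T.dist b a = 1 := by rw [dist_eq_one_iff_adj]; exact he.symm
  -- the shortest path from a to x
  obtain ⟨p, hp, hl⟩ := hT.isConnected.exists_path_of_dist a x
  rw [← hx] at hl
  have hbx : q ≤ T.dist b x := hqb x hxf
  have hbp : b ∉ p.support := by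
    apply not_mem_shortest p
    have e1 : T.dist a b = 1 := hab1
    have : T.dist b x = T.dist b x := rfl
    omega
  have hp1 : (SimpleGraph.Walk.cons he.symm p).IsPath :=
    SimpleGraph.Walk.IsPath.cons hp hbp
  by_cases hxy : x = y
  · -- one path from b to x of length q+1, another of length q
    subst hxy
    obtain ⟨p2, hp2, hl2⟩ := hT.isConnected.exists_path_of_dist b x
    have := hT.IsAcyclic.path_unique ⟨SimpleGraph.Walk.cons he.symm p, hp1⟩ ⟨p2, hp2⟩
    have hlen : (SimpleGraph.Walk.cons he.symm p).length = p2.length := by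
      rw [Subtype.mk_eq_mk.mp this]
    rw [SimpleGraph.Walk.length_cons] at hlen
    rw [← hy, ← heq] at hl2
    omega
  · -- f = s(x,y)
    have hfxy : f = s(x, y) := (Sym2.mem_and_mem_iff hxy).mp ⟨hxf, hyf⟩
    have hadjxy : T.Adj x y := by rw [hfxy] at hf; exact hf
    have hxy1 : T.dist y x = 1 := by rw [dist_eq_one_iff_adj]; exact hadjxy.symm
    -- path 2: shortest path b ⇝ y, concat edge y-x
    obtain ⟨p3, hp3, hl3⟩ := hT.isConnected.exists_path_of_dist b y
    rw [← hy, ← heq] at hl3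
    have hxp3 : x ∉ p3.support := by
      apply not_mem_shortest p3
      have := hqb x hxf
      have hxyne : T.dist x y ≠ 0 := by
        rw [SimpleGraph.dist_comm] at hxy1; omega
      omega
    have hp2path : (p3.concat hadjxy.symm).IsPath := by
      rw [← SimpleGraph.Walk.isPath_reverse_iff, SimpleGraph.Walk.reverse_concat]
      exact SimpleGraph.Walk.IsPath.cons (by rwa [SimpleGraph.Walk.isPath_reverse_iff])
        (by rwa [SimpleGraph.Walk.support_reverse, List.mem_reverse])
    -- the two paths are equal by uniqueness
    have hun := hT.IsAcyclic.path_unique ⟨SimpleGraph.Walk.cons he.symm p, hp1⟩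
      ⟨p3.concat hadjxy.symm, hp2path⟩
    have heqw : SimpleGraph.Walk.cons he.symm p = p3.concat hadjxy.symm :=
      Subtype.mk_eq_mk.mp hun
    -- f is an edge of the right-hand side but not of the left-hand side
    have hfr : f ∈ (p3.concat hadjxy.symm).edges := by
      rw [SimpleGraph.Walk.edges_concat, hfxy]
      simp [Sym2.eq_swap]
    rw [← heqw] at hfr
    rw [SimpleGraph.Walk.edges_cons] at hfr
    rcases List.mem_cons.mp hfr with hc1 | hc2
    · exact hef (by rw [hc1]; exact Sym2.eq_swap)
    · -- f ∈ p.edges : then y ∈ p.support, impossible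
      have hyp : y ∈ p.support := by
        rw [hfxy] at hc2
        exact SimpleGraph.Walk.snd_mem_support_of_mem_edges p hc2
      have h1 : (p.takeUntil y hyp).length + (p.dropUntil y hyp).length = p.length := by
        rw [← SimpleGraph.Walk.length_append, SimpleGraph.Walk.take_spec]
      have h2 : T.dist a y ≤ (p.takeUntil y hyp).length := dist_le _
      have h3 : T.dist y x ≤ (p.dropUntil y hyp).length := dist_le _
      have h4 : q ≤ T.dist a y := hqa y hyf
      omega

/-- For distinct edges `e ≠ f` of a tree, `md a f + md b f = 2 * Md e f + 1`. -/
lemma md_add_md (hT : T.IsTree) {a b : V} (he : T.Adj a b) {f : Sym2 V}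
    (hf : f ∈ T.edgeSet) (hef : s(a, b) ≠ f) :
    md T a f + md T b f = 2 * Md T s(a, b) f + 1 := by
  have h1 := md_ne hT he hf hef
  have h2 := md_adj hT.isConnected he f
  have h3 := md_adj hT.isConnected he.symm f
  simp only [Md_mk]
  omega


lemma sym2_rep (s : Sym2 V) : ∃ a b, s = s(a, b) := by
  induction s using Sym2.ind with | _ a b => exact ⟨a, b, rfl⟩

open Classical in
noncomputable def par (T : SimpleGraph V) (u v : V) : V :=
  if h : ∃ w, T.Adj w v ∧ T.dist u w + 1 = T.dist u v then h.choose else v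

lemma par_spec (hT : T.IsTree) {u v : V} (h : v ≠ u) :
    T.Adj (par T u v) v ∧ T.dist u (par T u v) + 1 = T.dist u v := by
  have hx := exists_parent hT h
  rw [par]
  rw [dif_pos hx]
  exact hx.choose_spec

lemma par_eq (hT : T.IsTree) {a b u : V} (hab : T.Adj a b)
    (hd : T.dist u a + 1 = T.dist u b) : par T u b = a := by
  have hbu : b ≠ u := by
    intro hbu; rw [hbu, SimpleGraph.dist_self] at hd; omega
  obtain ⟨h1, h2⟩ := par_spec hT hbu
  exact parent_unique hT h1 h2 hab hd

section Sums

variable [Fintype V] [Fintype T.edgeSet]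

lemma sum_edgeSet (hT : T.IsTree) (u : V) (g : Sym2 V → ℚ) :
    ∑ e : T.edgeSet, g e.1 = ∑ v ∈ Finset.univ.erase u, g s(par T u v, v) := by
  symm
  refine Finset.sum_bij
    (fun v hv => (⟨s(par T u v, v),
      (par_spec hT (Finset.ne_of_mem_erase hv)).1⟩ : T.edgeSet)) ?_ ?_ ?_ ?_
  · intro a ha; exact Finset.mem_univ _
  · intro v hv v' hv' heq
    have hv1 := par_spec hT (Finset.ne_of_mem_erase hv)
    have hv2 := par_spec hT (Finset.ne_of_mem_erase hv')
    replace heq : s(par T u v, v) = s(par T u v', v') := congrArg Subtype.val heq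
    rw [Sym2.eq_iff] at heq
    rcases heq with ⟨-, h⟩ | ⟨h1, h2⟩
    · exact h
    · exfalso
      rw [h1] at hv1
      rw [← h2] at hv2
      omega
  · intro e he
    obtain ⟨a, b, hab⟩ := sym2_rep (e.1)
    have hadj : T.Adj a b := by
      have := e.2; rwa [hab, SimpleGraph.mem_edgeSet] at this
    have hne := tree_dist_ne hT hadj u
    have h2 := dist_adj_le hT.isConnected hadj u
    have h3 := dist_adj_le hT.isConnected hadj.symm u
    rcases lt_or_gt_of_ne hne with h | h
    · have hd : T.dist u a + 1 = T.dist u b := by omega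
      have hb : b ≠ u := by intro hbu; rw [hbu, SimpleGraph.dist_self] at hd; omega
      refine ⟨b, Finset.mem_erase.mpr ⟨hb, Finset.mem_univ _⟩, ?_⟩
      apply Subtype.ext
      simp only
      rw [par_eq hT hadj hd, ← hab]
    · have hd : T.dist u b + 1 = T.dist u a := by omega
      have ha : a ≠ u := by intro hau; rw [hau, SimpleGraph.dist_self] at hd; omega
      refine ⟨a, Finset.mem_erase.mpr ⟨ha, Finset.mem_univ _⟩, ?_⟩
      apply Subtype.ext
      simp only
      rw [par_eq hT hadj.symm hd, hab]
      exact Sym2.eq_swap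
  · intro v hv; rfl


noncomputable def es (g : V → ℚ) : Sym2 V → ℚ :=
  Sym2.lift ⟨fun a b => g a + g b, fun _ _ => add_comm _ _⟩

@[simp] lemma es_mk {g : V → ℚ} {a b : V} : es g s(a, b) = g a + g b := rfl

lemma es_congr {g h : V → ℚ} (hg : ∀ x, g x = h x) (t : Sym2 V) : es g t = es h t := by
  induction t using Sym2.ind with | _ a b => simp [hg]

lemma es_sum {ι : Type*} (s : Finset ι) (g : ι → V → ℚ) (t : Sym2 V) :
    es (fun x => ∑ i ∈ s, g i x) t = ∑ i ∈ s, es (g i) t := by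
  induction t using Sym2.ind with | _ a b => simp [Finset.sum_add_distrib]

lemma card_pos' (u : V) : 0 < Fintype.card V := Fintype.card_pos_iff.mpr ⟨u⟩

lemma sum_erase_dist (u : V) :
    ∑ v ∈ Finset.univ.erase u, (T.dist u v : ℚ) = ∑ v, (T.dist u v : ℚ) := by
  apply Finset.sum_erase
  simp

lemma LA1 (hT : T.IsTree) (u : V) :
    ∑ e : T.edgeSet, (md T u (e : Sym2 V) : ℚ)
      = (∑ v, (T.dist u v : ℚ)) - ((Fintype.card V : ℚ) - 1) := by
  rw [sum_edgeSet hT u (fun s => (md T u s : ℚ))]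
  have key : ∀ v ∈ Finset.univ.erase u,
      (md T u s(par T u v, v) : ℚ) = (T.dist u v : ℚ) - 1 := by
    intro v hv
    obtain ⟨h1, h2⟩ := par_spec hT (Finset.ne_of_mem_erase hv)
    have hmd : md T u s(par T u v, v) = T.dist u (par T u v) := by
      simp only [md_mk]; omega
    rw [hmd, ← h2]
    push_cast; ring
  rw [Finset.sum_congr rfl key, Finset.sum_sub_distrib, sum_erase_dist]
  congr 1
  rw [Finset.sum_const, Finset.card_erase_of_mem (Finset.mem_univ u), Finset.card_univ]
  have := card_pos' u
  rw [nsmul_eq_mul, mul_one, Nat.cast_pred this]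

lemma LA2 (hT : T.IsTree) (u : V) :
    ∑ e : T.edgeSet, es (fun x => (T.dist u x : ℚ)) (e : Sym2 V)
      = 2 * (∑ v, (T.dist u v : ℚ)) - ((Fintype.card V : ℚ) - 1) := by
  rw [sum_edgeSet hT u]
  have key : ∀ v ∈ Finset.univ.erase u,
      es (fun x => (T.dist u x : ℚ)) s(par T u v, v) = 2 * (T.dist u v : ℚ) - 1 := by
    intro v hv
    obtain ⟨h1, h2⟩ := par_spec hT (Finset.ne_of_mem_erase hv)
    rw [es_mk, ← h2]
    push_cast; ring
  rw [Finset.sum_congr rfl key, Finset.sum_sub_distrib, ← Finset.mul_sum, sum_erase_dist]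
  congr 1
  rw [Finset.sum_const, Finset.card_erase_of_mem (Finset.mem_univ u), Finset.card_univ]
  have := card_pos' u
  rw [nsmul_eq_mul, mul_one, Nat.cast_pred this]

lemma LA2' (hT : T.IsTree) (u : V) :
    ∑ e : T.edgeSet, es (fun x => (T.dist x u : ℚ)) (e : Sym2 V)
      = 2 * (∑ v, (T.dist u v : ℚ)) - ((Fintype.card V : ℚ) - 1) := by
  rw [← LA2 hT u]
  apply Finset.sum_congr rfl
  intro e he
  apply es_congr
  intro x
  rw [SimpleGraph.dist_comm]

lemma card_edgeSet_q (hT : T.IsTree) [Nonempty V] :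
    (Fintype.card T.edgeSet : ℚ) = (Fintype.card V : ℚ) - 1 := by
  have h1 : Fintype.card T.edgeSet = T.edgeFinset.card := by
    rw [SimpleGraph.edgeFinset, Set.toFinset_card]
  have h2 := hT.card_edgeFinset
  have h4 := congrArg (Nat.cast : ℕ → ℚ) h2
  push_cast at h4
  rw [h1]; linarith

lemma LA3 (hT : T.IsTree) [Nonempty V] (f : T.edgeSet) :
    ∑ e : T.edgeSet, es (fun x => (md T x (f : Sym2 V) : ℚ)) (e : Sym2 V)
      = es (fun x => ∑ w, (T.dist x w : ℚ)) (f : Sym2 V)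
        - 2 * ((Fintype.card V : ℚ) - 1) := by
  obtain ⟨c, d, hcd⟩ := sym2_rep (f : Sym2 V)
  have hadj : T.Adj c d := by
    have := f.2; rwa [hcd, SimpleGraph.mem_edgeSet] at this
  have parity : ∀ x, (md T x (f : Sym2 V) : ℚ)
      = ((T.dist x c : ℚ) + (T.dist x d : ℚ) - 1) / 2 := by
    intro x
    have h5 := md_parity hT hadj x
    have h6 : 2 * (md T x s(c, d) : ℚ) + 1 = (T.dist x c : ℚ) + (T.dist x d : ℚ) := by
      exact_mod_cast congrArg (Nat.cast : ℕ → ℚ) h5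
    rw [hcd]
    linarith
  have step : ∀ e : T.edgeSet, es (fun x => (md T x (f : Sym2 V) : ℚ)) (e : Sym2 V)
      = (es (fun x => (T.dist x c : ℚ)) (e : Sym2 V)
         + es (fun x => (T.dist x d : ℚ)) (e : Sym2 V) - 2) / 2 := by
    intro e
    obtain ⟨a, b, hab⟩ := sym2_rep (e : Sym2 V)
    rw [hab]
    simp only [es_mk, parity]
    ring
  rw [Finset.sum_congr rfl (fun e _ => step e)]
  rw [← Finset.sum_div, Finset.sum_sub_distrib, Finset.sum_add_distrib, LA2' hT c, LA2' hT d,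
      Finset.sum_const, Finset.card_univ, nsmul_eq_mul, card_edgeSet_q hT, hcd, es_mk]
  ring


lemma LS22 (hT : T.IsTree) [Nonempty V] :
    ∑ e : T.edgeSet, ∑ f : T.edgeSet,
        (if e = f then (0 : ℚ) else 2 * (Md T e.1 f.1 : ℚ) + 2)
      = 2 * (∑ u, ∑ v, (T.dist u v : ℚ))
        - (Fintype.card V : ℚ) * ((Fintype.card V : ℚ) - 1)
        - ((Fintype.card V : ℚ) - 1) ^ 2 - ((Fintype.card V : ℚ) - 1) := by
  rw [Finset.sum_comm]
  have inner : ∀ f : T.edgeSet,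
      ∑ e : T.edgeSet, (if e = f then (0 : ℚ) else 2 * (Md T e.1 f.1 : ℚ) + 2)
        = es (fun x => ∑ w, (T.dist x w : ℚ)) (f : Sym2 V)
          - ((Fintype.card V : ℚ) - 1) - 1 := by
    intro f
    have key : ∀ e : T.edgeSet, (if e = f then (0 : ℚ) else 2 * (Md T e.1 f.1 : ℚ) + 2)
        = es (fun x => (md T x (f : Sym2 V) : ℚ)) (e : Sym2 V) + 1
          - (if e = f then (1 : ℚ) else 0) := by
      intro e
      obtain ⟨a, b, hab⟩ := sym2_rep (e : Sym2 V)
      have hadj : T.Adj a b := by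
        have := e.2; rwa [hab, SimpleGraph.mem_edgeSet] at this
      by_cases h : e = f
      · subst h
        simp only [if_pos rfl, hab, es_mk]
        rw [md_eq_zero_of_mem (Sym2.mem_mk_left a b), md_eq_zero_of_mem (Sym2.mem_mk_right a b)]
        norm_num
      · have hne : s(a, b) ≠ (f : Sym2 V) := by
          rw [← hab]
          intro hh
          exact h (Subtype.ext hh)
        have h7 := md_add_md hT hadj f.2 hne
        have h8 : (md T a (f : Sym2 V) : ℚ) + (md T b (f : Sym2 V) : ℚ)
            = 2 * (Md T s(a, b) (f : Sym2 V) : ℚ) + 1 := by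
          exact_mod_cast congrArg (Nat.cast : ℕ → ℚ) h7
        simp only [if_neg h, hab, es_mk]
        linarith
    rw [Finset.sum_congr rfl (fun e _ => key e)]
    rw [Finset.sum_sub_distrib, Finset.sum_add_distrib, LA3 hT f, Finset.sum_const,
        Finset.card_univ, nsmul_eq_mul, mul_one, card_edgeSet_q hT,
        Finset.sum_ite_eq' Finset.univ f (fun _ => (1 : ℚ))]
    simp only [Finset.mem_univ, if_pos]
    ring
  rw [Finset.sum_congr rfl (fun f _ => inner f)]
  have hes : ∀ f : T.edgeSet, es (fun x => ∑ w, (T.dist x w : ℚ)) (f : Sym2 V)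
      = ∑ w, es (fun x => (T.dist x w : ℚ)) (f : Sym2 V) := fun f => es_sum _ _ _
  rw [Finset.sum_sub_distrib, Finset.sum_sub_distrib]
  rw [Finset.sum_congr rfl (fun f _ => hes f), Finset.sum_comm]
  rw [Finset.sum_congr rfl (fun w (_ : w ∈ Finset.univ) => LA2' hT w)]
  rw [Finset.sum_sub_distrib]
  rw [← Finset.mul_sum]
  simp only [Finset.sum_const, Finset.card_univ, nsmul_eq_mul, mul_one, card_edgeSet_q hT]
  ring

end Sums

section GLayer

variable {m : ℕ}

lemma adj_vm {u : V} {e : T.edgeSet} :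
    (tFractal T m).Adj (Sum.inl u) (Sum.inr (Sum.inl e)) ↔ u ∈ (e : Sym2 V) := by
  simp [tFractal, SimpleGraph.fromRel_adj]

lemma adj_ml {e f : T.edgeSet} {i : Fin m} :
    (tFractal T m).Adj (Sum.inr (Sum.inl e)) (Sum.inr (Sum.inr (f, i))) ↔ e = f := by
  simp [tFractal, SimpleGraph.fromRel_adj]

lemma not_adj_vv {u v : V} : ¬ (tFractal T m).Adj (Sum.inl u) (Sum.inl v) := by
  simp [tFractal, SimpleGraph.fromRel_adj]

lemma not_adj_vl {u : V} {f : T.edgeSet} {i : Fin m} :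
    ¬ (tFractal T m).Adj (Sum.inl u) (Sum.inr (Sum.inr (f, i))) := by
  simp [tFractal, SimpleGraph.fromRel_adj]

lemma not_adj_mm {e f : T.edgeSet} :
    ¬ (tFractal T m).Adj (Sum.inr (Sum.inl e)) (Sum.inr (Sum.inl f)) := by
  simp [tFractal, SimpleGraph.fromRel_adj]

lemma not_adj_ll {e f : T.edgeSet} {i j : Fin m} :
    ¬ (tFractal T m).Adj (Sum.inr (Sum.inr (e, i))) (Sum.inr (Sum.inr (f, j))) := by
  simp [tFractal, SimpleGraph.fromRel_adj]


noncomputable def Dfun (T : SimpleGraph V) (m : ℕ) :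
    (V ⊕ (↥T.edgeSet ⊕ ↥T.edgeSet × Fin m)) → (V ⊕ (↥T.edgeSet ⊕ ↥T.edgeSet × Fin m)) → ℕ
  | inl u, inl v => 2 * T.dist u v
  | inl u, inr (inl e) => 2 * md T u e.1 + 1
  | inl u, inr (inr (e, _)) => 2 * md T u e.1 + 2
  | inr (inl e), inl u => 2 * md T u e.1 + 1
  | inr (inl e), inr (inl f) => if e = f then 0 else 2 * Md T e.1 f.1 + 2
  | inr (inl e), inr (inr (f, _)) => if e = f then 1 else 2 * Md T e.1 f.1 + 3
  | inr (inr (e, _)), inl u => 2 * md T u e.1 + 2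
  | inr (inr (e, _)), inr (inl f) => if e = f then 1 else 2 * Md T e.1 f.1 + 3
  | inr (inr (e, i)), inr (inr (f, j)) =>
      if e = f then (if i = j then 0 else 2) else 2 * Md T e.1 f.1 + 4

lemma Dfun_self (z : V ⊕ (↥T.edgeSet ⊕ ↥T.edgeSet × Fin m)) : Dfun T m z z = 0 := by
  rcases z with u | e | ⟨e, i⟩ <;> simp [Dfun]

lemma mem_edge_cases {s : Sym2 V} (hs : s ∈ T.edgeSet) {u x : V}
    (hu : u ∈ s) (hx : x ∈ s) : u = x ∨ T.Adj x u := by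
  obtain ⟨a, b, rfl⟩ := sym2_rep s
  have hadj : T.Adj a b := hs
  rw [Sym2.mem_iff] at hu hx
  rcases hu with rfl | rfl <;> rcases hx with rfl | rfl
  · exact Or.inl rfl
  · exact Or.inr hadj.symm
  · exact Or.inr hadj
  · exact Or.inl rfl

lemma dist_le_md' (hc : T.Connected) {s : Sym2 V} (hs : s ∈ T.edgeSet) {u : V}
    (hu : u ∈ s) (v : V) : T.dist u v ≤ md T v s + 1 := by
  obtain ⟨x0, hx0, hmd⟩ := exists_md (T := T) (u := v) s
  rcases mem_edge_cases hs hu hx0 with rfl | hadj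
  · rw [SimpleGraph.dist_comm] at hmd; omega
  · have h1 := dist_adj_le hc hadj v
    have h2 : T.dist u v = T.dist v u := SimpleGraph.dist_comm
    omega

lemma Dfun_lip (hT : T.IsTree) (x y z : V ⊕ (↥T.edgeSet ⊕ ↥T.edgeSet × Fin m))
    (hxy : (tFractal T m).Adj x y) : Dfun T m x z ≤ Dfun T m y z + 1 := by
  have hc := hT.isConnected
  rcases x with u | e | ⟨e, i⟩ <;> rcases y with v | f | ⟨f, j⟩
  · exact absurd hxy not_adj_vv
  · -- inl u ~ mid f
    have hu : u ∈ (f : Sym2 V) := adj_vm.mp hxy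
    rcases z with w | g | ⟨g, k⟩ <;> simp only [Dfun]
    · have h1 := dist_le_md' hc f.2 hu w
      omega
    · split_ifs with h
      · subst h
        rw [md_eq_zero_of_mem hu]
      · have h1 := md_le_Md_add_one hc f.2 hu (t := (g : Sym2 V))
        omega
    · split_ifs with h
      · subst h
        rw [md_eq_zero_of_mem hu]
      · have h1 := md_le_Md_add_one hc f.2 hu (t := (g : Sym2 V))
        omega
  · exact absurd hxy not_adj_vl
  · -- mid e ~ inl v
    have hv : v ∈ (e : Sym2 V) := adj_vm.mp hxy.symm
    rcases z with w | g | ⟨g, k⟩ <;> simp only [Dfun]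
    · have h1 : md T w (e : Sym2 V) ≤ T.dist w v := md_le_of_mem hv
      have h2 : T.dist w v = T.dist v w := SimpleGraph.dist_comm
      omega
    · split_ifs with h
      · omega
      · have h1 := Md_le_of_mem (T := T) (t := (g : Sym2 V)) hv
        omega
    · split_ifs with h
      · omega
      · have h1 := Md_le_of_mem (T := T) (t := (g : Sym2 V)) hv
        omega
  · exact absurd hxy not_adj_mm
  · -- mid e ~ leaf (f, j), with e = f
    have hef : e = f := adj_ml.mp hxy
    subst hef
    rcases z with w | g | ⟨g, k⟩ <;> simp only [Dfun]
    · omega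
    · split_ifs with h <;> omega
    · split_ifs with h h' h' <;> omega
  · exact absurd hxy.symm not_adj_vl
  · -- leaf (e,i) ~ mid f, with f = e
    have hef : f = e := adj_ml.mp hxy.symm
    subst hef
    rcases z with w | g | ⟨g, k⟩ <;> simp only [Dfun]
    · omega
    · split_ifs with h <;> omega
    · split_ifs with h h' h' <;> omega
  · exact absurd hxy not_adj_ll


lemma walk_lift {u v : V} (p : T.Walk u v) :
    ∃ q : (tFractal T m).Walk (inl u) (inl v), q.length = 2 * p.length := by
  induction p with
  | nil => exact ⟨.nil, rfl⟩
  | @cons a b c h p ih =>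
    obtain ⟨q, hq⟩ := ih
    have he : s(a, b) ∈ T.edgeSet := h
    have a1 : (tFractal T m).Adj (inl a) (inr (inl ⟨s(a, b), he⟩)) :=
      adj_vm.mpr (Sym2.mem_mk_left _ _)
    have a2 : (tFractal T m).Adj (inr (inl (⟨s(a, b), he⟩ : T.edgeSet))) (inl b) :=
      (adj_vm.mpr (Sym2.mem_mk_right _ _)).symm
    refine ⟨.cons a1 (.cons a2 q), ?_⟩
    simp only [SimpleGraph.Walk.length_cons, hq]
    ring

lemma dist_vv_le (hT : T.IsTree) (u v : V) :
    (tFractal T m).dist (inl u) (inl v) ≤ 2 * T.dist u v := by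
  obtain ⟨p, hp⟩ := (hT.isConnected u v).exists_walk_length_eq_dist
  obtain ⟨q, hq⟩ := walk_lift (m := m) p
  have := SimpleGraph.dist_le q
  omega

lemma reach (hT : T.IsTree) : (tFractal T m).Preconnected := by
  have hr : ∀ x, ∃ u : V, (tFractal T m).Reachable x (inl u) := by
    intro x
    rcases x with u | e | ⟨e, i⟩
    · exact ⟨u, .refl _⟩
    · obtain ⟨a, b, hab⟩ := sym2_rep (e : Sym2 V)
      exact ⟨a, ((adj_vm.mpr (by rw [hab]; simp)).symm :
        (tFractal T m).Adj (inr (inl e)) (inl a)).reachable⟩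
    · obtain ⟨a, b, hab⟩ := sym2_rep (e : Sym2 V)
      refine ⟨a, .trans ((adj_ml.mpr rfl).symm :
        (tFractal T m).Adj (inr (inr (e, i))) (inr (inl e))).reachable
        ((adj_vm.mpr (by rw [hab]; simp)).symm :
        (tFractal T m).Adj (inr (inl e)) (inl a)).reachable⟩
  intro x y
  obtain ⟨u, hu⟩ := hr x
  obtain ⟨v, hv⟩ := hr y
  have huv : (tFractal T m).Reachable (inl u) (inl v) := by
    obtain ⟨p⟩ := hT.isConnected u v
    obtain ⟨q, -⟩ := walk_lift (m := m) p
    exact ⟨q⟩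
  exact hu.trans (huv.trans hv.symm)

lemma connectedG (hT : T.IsTree) [Nonempty V] : (tFractal T m).Connected := by
  haveI : Nonempty (V ⊕ (↥T.edgeSet ⊕ ↥T.edgeSet × Fin m)) :=
    ⟨inl (Classical.arbitrary V)⟩
  exact ⟨reach hT⟩

lemma dfun_le_dist (hT : T.IsTree) (x z : V ⊕ (↥T.edgeSet ⊕ ↥T.edgeSet × Fin m)) :
    Dfun T m x z ≤ (tFractal T m).dist x z := by
  have key : ∀ (y : V ⊕ (↥T.edgeSet ⊕ ↥T.edgeSet × Fin m))
      (p : (tFractal T m).Walk y z), Dfun T m y z ≤ p.length := by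
    intro y p
    induction p with
    | nil => exact le_of_eq (Dfun_self _)
    | @cons a b c h p ih =>
      have := Dfun_lip hT a b c h
      simp only [SimpleGraph.Walk.length_cons]
      omega
  obtain ⟨p, hp⟩ := (reach (m := m) hT x z).exists_walk_length_eq_dist
  have := key x p
  omega

lemma dist_adj_one {x y : V ⊕ (↥T.edgeSet ⊕ ↥T.edgeSet × Fin m)}
    (h : (tFractal T m).Adj x y) : (tFractal T m).dist x y ≤ 1 := by
  have := SimpleGraph.dist_le (SimpleGraph.Walk.cons h SimpleGraph.Walk.nil)
  simpa using this

lemma dist_vm_le (hT : T.IsTree) [Nonempty V] (u : V) (e : T.edgeSet) :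
    (tFractal T m).dist (inl u) (inr (inl e)) ≤ 2 * md T u e.1 + 1 := by
  obtain ⟨x0, hx0, hmd⟩ := exists_md (T := T) (u := u) e.1
  have h1 := (connectedG (m := m) hT).dist_triangle (u := inl u) (v := inl x0)
    (w := inr (inl e))
  have h2 := dist_vv_le (m := m) hT u x0
  have h3 := dist_adj_one (adj_vm.mpr hx0 :
    (tFractal T m).Adj (inl x0) (inr (inl e)))
  omega

lemma dist_mm_le (hT : T.IsTree) [Nonempty V] (e f : T.edgeSet) :
    (tFractal T m).dist (inr (inl e)) (inr (inl f)) ≤ 2 * Md T e.1 f.1 + 2 := by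
  obtain ⟨x0, hx0, hmd⟩ := exists_Md (T := T) e.1 f.1
  have h1 := (connectedG (m := m) hT).dist_triangle (u := inr (inl e)) (v := inl x0)
    (w := inr (inl f))
  have h2 := dist_adj_one ((adj_vm.mpr hx0 :
    (tFractal T m).Adj (inl x0) (inr (inl e))).symm)
  have h3 := dist_vm_le (m := m) hT x0 f
  omega

lemma dist_ml_le (hT : T.IsTree) [Nonempty V] (e f : T.edgeSet) (j : Fin m) :
    (tFractal T m).dist (inr (inl e)) (inr (inr (f, j))) ≤ 2 * Md T e.1 f.1 + 3 := by
  have h1 := (connectedG (m := m) hT).dist_triangle (u := inr (inl e))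
    (v := inr (inl f)) (w := inr (inr (f, j)))
  have h2 := dist_mm_le (m := m) hT e f
  have h3 := dist_adj_one (adj_ml.mpr rfl :
    (tFractal T m).Adj (inr (inl f)) (inr (inr (f, j))))
  omega

theorem dist_eq (hT : T.IsTree) [Nonempty V]
    (x z : V ⊕ (↥T.edgeSet ⊕ ↥T.edgeSet × Fin m)) :
    (tFractal T m).dist x z = Dfun T m x z := by
  have hGc := connectedG (m := m) hT
  refine le_antisymm ?_ (dfun_le_dist hT x z)
  rcases x with u | e | ⟨e, i⟩ <;> rcases z with v | f | ⟨f, j⟩ <;> simp only [Dfun]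
  · exact dist_vv_le hT u v
  · exact dist_vm_le hT u f
  · -- inl u to leaf (f, j)
    have h1 := hGc.dist_triangle (u := inl u) (v := inr (inl f)) (w := inr (inr (f, j)))
    have h2 := dist_vm_le (m := m) hT u f
    have h3 := dist_adj_one (adj_ml.mpr rfl :
      (tFractal T m).Adj (inr (inl f)) (inr (inr (f, j))))
    omega
  · rw [SimpleGraph.dist_comm]
    exact dist_vm_le hT v e
  · split_ifs with h
    · subst h; simp
    · exact dist_mm_le hT e f
  · split_ifs with h
    · subst h
      exact dist_adj_one (adj_ml.mpr rfl)
    · exact dist_ml_le hT e f j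
  · rw [SimpleGraph.dist_comm]
    have h1 := hGc.dist_triangle (u := inl v) (v := inr (inl e)) (w := inr (inr (e, i)))
    have h2 := dist_vm_le (m := m) hT v e
    have h3 := dist_adj_one (adj_ml.mpr rfl :
      (tFractal T m).Adj (inr (inl e)) (inr (inr (e, i))))
    omega
  · rw [SimpleGraph.dist_comm]
    split_ifs with h
    · subst h
      exact dist_adj_one (adj_ml.mpr rfl)
    · have h1 := dist_ml_le (m := m) hT f e i
      rw [Md_comm hT.isConnected] at h1
      exact h1
  · split_ifs with h h2
    · subst h; subst h2; simp
    · subst h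
      have h1 := hGc.dist_triangle (u := inr (inr (e, i))) (v := inr (inl e))
        (w := inr (inr (e, j)))
      have h3 := dist_adj_one ((adj_ml.mpr rfl :
        (tFractal T m).Adj (inr (inl e)) (inr (inr (e, i)))).symm)
      have h4 := dist_adj_one (adj_ml.mpr rfl :
        (tFractal T m).Adj (inr (inl e)) (inr (inr (e, j))))
      omega
    · have h1 := hGc.dist_triangle (u := inr (inr (e, i))) (v := inr (inl e))
        (w := inr (inr (f, j)))
      have h3 := dist_adj_one ((adj_ml.mpr rfl :
        (tFractal T m).Adj (inr (inl e)) (inr (inr (e, i)))).symm)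
      have h4 := dist_ml_le (m := m) hT e f j
      omega

end GLayer

end TFaux

open TFaux in
theorem wiener_tFractal {V : Type*} [Fintype V] [DecidableEq V] [Nonempty V]
    (T : SimpleGraph V) [DecidableRel T.Adj] (hT : T.IsTree) (m : ℕ) (hm : 1 ≤ m) :
    wienerIndex (tFractal T m) =
      2 * ((m : ℚ) + 2) ^ 2 * wienerIndex T
        - ((m : ℚ) + 2) * (Fintype.card V : ℚ) ^ 2
        - ((m : ℚ) - 1) * ((m : ℚ) + 2) * (Fintype.card V : ℚ)
        + (m : ℚ) ^ 2 + 2 * (m : ℚ) := by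
  have hdist : ∀ x y, (((tFractal T m).dist x y : ℚ)) = ((Dfun T m x y : ℚ)) := by
    intro x y; rw [dist_eq hT]
  simp only [wienerIndex, hdist]
  simp only [Fintype.sum_sum_type, Fintype.sum_prod_type]
  simp only [Dfun]
  push_cast
  set n : ℚ := (Fintype.card V : ℚ) with hn
  have hK : (Fintype.card T.edgeSet : ℚ) = n - 1 := card_edgeSet_q hT
  -- single-basepoint edge sums
  have p2 : ∀ u : V, ∑ e : T.edgeSet, (2 * (md T u (e : Sym2 V) : ℚ) + 1)
      = 2 * (∑ v, (T.dist u v : ℚ)) - (n - 1) := by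
    intro u
    rw [Finset.sum_add_distrib, Finset.sum_const, Finset.card_univ, ← Finset.mul_sum,
      LA1 hT u, nsmul_eq_mul, hK, mul_one]
    ring
  have p2' : ∀ u : V, ∑ e : T.edgeSet, (2 * (md T u (e : Sym2 V) : ℚ) + 2)
      = 2 * (∑ v, (T.dist u v : ℚ)) := by
    intro u
    rw [Finset.sum_add_distrib, Finset.sum_const, Finset.card_univ, ← Finset.mul_sum,
      LA1 hT u, nsmul_eq_mul, hK]
    ring
  have B1 : ∑ u : V, ∑ v : V, 2 * (T.dist u v : ℚ)
      = 2 * (∑ u : V, ∑ v : V, (T.dist u v : ℚ)) := by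
    rw [Finset.sum_congr rfl fun u (_ : u ∈ Finset.univ) => (Finset.mul_sum Finset.univ _ (2:ℚ)).symm,
      ← Finset.mul_sum]
  have B2 : ∑ u : V, ∑ e : T.edgeSet, (2 * (md T u (e : Sym2 V) : ℚ) + 1)
      = 2 * (∑ u : V, ∑ v : V, (T.dist u v : ℚ)) - n * (n - 1) := by
    rw [Finset.sum_congr rfl fun u _ => p2 u, Finset.sum_sub_distrib, ← Finset.mul_sum,
      Finset.sum_const, Finset.card_univ, nsmul_eq_mul, ← hn]
  have B3 : ∑ u : V, ∑ e : T.edgeSet, ∑ _i : Fin m, (2 * (md T u (e : Sym2 V) : ℚ) + 2)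
      = 2 * m * (∑ u : V, ∑ v : V, (T.dist u v : ℚ)) := by
    have h1 : ∀ u : V, ∑ e : T.edgeSet, ∑ _i : Fin m, (2 * (md T u (e : Sym2 V) : ℚ) + 2)
        = m * (2 * (∑ v, (T.dist u v : ℚ))) := by
      intro u
      have h2 : ∀ e : T.edgeSet, ∑ _i : Fin m, (2 * (md T u (e : Sym2 V) : ℚ) + 2)
          = m * (2 * (md T u (e : Sym2 V) : ℚ) + 2) := by
        intro e
        rw [Finset.sum_const, Finset.card_univ, Fintype.card_fin, nsmul_eq_mul]
      rw [Finset.sum_congr rfl fun e _ => h2 e, ← Finset.mul_sum, p2' u]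
    rw [Finset.sum_congr rfl fun u _ => h1 u, ← Finset.mul_sum, ← Finset.mul_sum]
    ring
  have B4 : ∑ e : T.edgeSet, ∑ u : V, (2 * (md T u (e : Sym2 V) : ℚ) + 1)
      = 2 * (∑ u : V, ∑ v : V, (T.dist u v : ℚ)) - n * (n - 1) := by
    rw [Finset.sum_comm]
    exact B2
  have B5 := LS22 (T := T) hT
  rw [← hn] at B5
  have hone : ∀ e f : T.edgeSet, (if e = f then (1 : ℚ) else 2 * (Md T e.1 f.1 : ℚ) + 3)
      = (if e = f then (0 : ℚ) else 2 * (Md T e.1 f.1 : ℚ) + 2) + 1 := by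
    intro e f; split_ifs <;> ring
  have hEF1 : ∑ e : T.edgeSet, ∑ f : T.edgeSet,
      (if e = f then (1 : ℚ) else 2 * (Md T e.1 f.1 : ℚ) + 3)
      = (∑ e : T.edgeSet, ∑ f : T.edgeSet,
          (if e = f then (0 : ℚ) else 2 * (Md T e.1 f.1 : ℚ) + 2)) + (n - 1) ^ 2 := by
    have : ∀ e : T.edgeSet, ∑ f : T.edgeSet,
        (if e = f then (1 : ℚ) else 2 * (Md T e.1 f.1 : ℚ) + 3)
        = (∑ f : T.edgeSet, (if e = f then (0 : ℚ) else 2 * (Md T e.1 f.1 : ℚ) + 2))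
          + (n - 1) := by
      intro e
      rw [Finset.sum_congr rfl fun f _ => hone e f, Finset.sum_add_distrib,
        Finset.sum_const, Finset.card_univ, nsmul_eq_mul, mul_one, hK]
    rw [Finset.sum_congr rfl fun e _ => this e, Finset.sum_add_distrib,
      Finset.sum_const, Finset.card_univ, nsmul_eq_mul, hK]
    ring
  have B6 : ∑ e : T.edgeSet, ∑ f : T.edgeSet, ∑ _i : Fin m,
      (if e = f then (1 : ℚ) else 2 * (Md T e.1 f.1 : ℚ) + 3)
      = m * ((∑ e : T.edgeSet, ∑ f : T.edgeSet,
          (if e = f then (0 : ℚ) else 2 * (Md T e.1 f.1 : ℚ) + 2)) + (n - 1) ^ 2) := by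
    have h1 : ∀ (e f : T.edgeSet), ∑ _i : Fin m,
        (if e = f then (1 : ℚ) else 2 * (Md T e.1 f.1 : ℚ) + 3)
        = m * (if e = f then (1 : ℚ) else 2 * (Md T e.1 f.1 : ℚ) + 3) := by
      intro e f
      rw [Finset.sum_const, Finset.card_univ, Fintype.card_fin, nsmul_eq_mul]
    calc ∑ e : T.edgeSet, ∑ f : T.edgeSet, ∑ _i : Fin m,
        (if e = f then (1 : ℚ) else 2 * (Md T e.1 f.1 : ℚ) + 3)
        = ∑ e : T.edgeSet, ∑ f : T.edgeSet,
          m * (if e = f then (1 : ℚ) else 2 * (Md T e.1 f.1 : ℚ) + 3) := by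
          exact Finset.sum_congr rfl fun e _ => Finset.sum_congr rfl fun f _ => h1 e f
      _ = m * ∑ e : T.edgeSet, ∑ f : T.edgeSet,
          (if e = f then (1 : ℚ) else 2 * (Md T e.1 f.1 : ℚ) + 3) := by
          rw [Finset.sum_congr rfl fun e (_ : e ∈ Finset.univ) =>
            (Finset.mul_sum Finset.univ _ ((m : ℚ))).symm, ← Finset.mul_sum]
      _ = _ := by rw [hEF1]
  have B7 : ∑ e : T.edgeSet, ∑ _i : Fin m, ∑ u : V, (2 * (md T u (e : Sym2 V) : ℚ) + 2)
      = 2 * m * (∑ u : V, ∑ v : V, (T.dist u v : ℚ)) := by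
    have h1 : ∀ e : T.edgeSet, ∑ _i : Fin m, ∑ u : V, (2 * (md T u (e : Sym2 V) : ℚ) + 2)
        = m * ∑ u : V, (2 * (md T u (e : Sym2 V) : ℚ) + 2) := by
      intro e
      rw [Finset.sum_const, Finset.card_univ, Fintype.card_fin, nsmul_eq_mul]
    rw [Finset.sum_congr rfl fun e _ => h1 e, ← Finset.mul_sum, Finset.sum_comm,
      Finset.sum_congr rfl fun u _ => p2' u]
    rw [← Finset.mul_sum]
    ring
  have B8 : ∑ e : T.edgeSet, ∑ _i : Fin m, ∑ f : T.edgeSet,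
      (if e = f then (1 : ℚ) else 2 * (Md T e.1 f.1 : ℚ) + 3)
      = m * ((∑ e : T.edgeSet, ∑ f : T.edgeSet,
          (if e = f then (0 : ℚ) else 2 * (Md T e.1 f.1 : ℚ) + 2)) + (n - 1) ^ 2) := by
    have h1 : ∀ e : T.edgeSet, ∑ _i : Fin m, ∑ f : T.edgeSet,
        (if e = f then (1 : ℚ) else 2 * (Md T e.1 f.1 : ℚ) + 3)
        = m * ∑ f : T.edgeSet, (if e = f then (1 : ℚ) else 2 * (Md T e.1 f.1 : ℚ) + 3) := by
      intro e
      rw [Finset.sum_const, Finset.card_univ, Fintype.card_fin, nsmul_eq_mul]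
    rw [Finset.sum_congr rfl fun e _ => h1 e, ← Finset.mul_sum, hEF1]
  have B9 : ∑ e : T.edgeSet, ∑ i : Fin m, ∑ f : T.edgeSet, ∑ j : Fin m,
      (if e = f then (if i = j then (0 : ℚ) else 2) else 2 * (Md T e.1 f.1 : ℚ) + 4)
      = (m : ℚ) ^ 2 * ((∑ e : T.edgeSet, ∑ f : T.edgeSet,
          (if e = f then (0 : ℚ) else 2 * (Md T e.1 f.1 : ℚ) + 2)) + 2 * (n - 1) ^ 2)
        - 2 * m * (n - 1) := by
    have hj : ∀ (e f : T.edgeSet) (i : Fin m), ∑ j : Fin m,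
        (if e = f then (if i = j then (0 : ℚ) else 2) else 2 * (Md T e.1 f.1 : ℚ) + 4)
        = if e = f then 2 * (m : ℚ) - 2 else (m : ℚ) * (2 * (Md T e.1 f.1 : ℚ) + 4) := by
      intro e f i
      by_cases h : e = f
      · simp only [if_pos h]
        have h2 : ∀ j : Fin m, (if i = j then (0 : ℚ) else 2)
            = 2 - (if i = j then (2 : ℚ) else 0) := by
          intro j; split_ifs <;> ring
        rw [Finset.sum_congr rfl fun j _ => h2 j, Finset.sum_sub_distrib,
          Finset.sum_const, Finset.card_univ, Fintype.card_fin, nsmul_eq_mul,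
          Finset.sum_ite_eq Finset.univ i (fun _ => (2 : ℚ)),
          if_pos (Finset.mem_univ i)]
        ring
      · simp only [if_neg h]
        rw [Finset.sum_const, Finset.card_univ, Fintype.card_fin, nsmul_eq_mul]
    have hi : ∀ e : T.edgeSet, ∑ i : Fin m, ∑ f : T.edgeSet, ∑ j : Fin m,
        (if e = f then (if i = j then (0 : ℚ) else 2) else 2 * (Md T e.1 f.1 : ℚ) + 4)
        = m * ∑ f : T.edgeSet,
            (if e = f then 2 * (m : ℚ) - 2 else m * (2 * (Md T e.1 f.1 : ℚ) + 4)) := by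
      intro e
      have : ∀ i : Fin m, ∑ f : T.edgeSet, ∑ j : Fin m,
          (if e = f then (if i = j then (0 : ℚ) else 2) else 2 * (Md T e.1 f.1 : ℚ) + 4)
          = ∑ f : T.edgeSet,
            (if e = f then 2 * (m : ℚ) - 2 else m * (2 * (Md T e.1 f.1 : ℚ) + 4)) := by
        intro i
        exact Finset.sum_congr rfl fun f _ => hj e f i
      rw [Finset.sum_congr rfl fun i _ => this i, Finset.sum_const, Finset.card_univ,
        Fintype.card_fin, nsmul_eq_mul]
    have hsplit : ∀ e f : T.edgeSet,
        (if e = f then 2 * (m : ℚ) - 2 else m * (2 * (Md T e.1 f.1 : ℚ) + 4))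
        = m * ((if e = f then (0 : ℚ) else 2 * (Md T e.1 f.1 : ℚ) + 2) + 2)
          - (if e = f then (2 : ℚ) else 0) := by
      intro e f; split_ifs <;> ring
    rw [Finset.sum_congr rfl fun e _ => hi e, ← Finset.mul_sum]
    have : ∑ e : T.edgeSet, ∑ f : T.edgeSet,
        (if e = f then 2 * (m : ℚ) - 2 else m * (2 * (Md T e.1 f.1 : ℚ) + 4))
        = m * ((∑ e : T.edgeSet, ∑ f : T.edgeSet,
            (if e = f then (0 : ℚ) else 2 * (Md T e.1 f.1 : ℚ) + 2)) + 2 * (n - 1) ^ 2)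
          - 2 * (n - 1) := by
      have h3 : ∀ e : T.edgeSet, ∑ f : T.edgeSet,
          (if e = f then 2 * (m : ℚ) - 2 else m * (2 * (Md T e.1 f.1 : ℚ) + 4))
          = m * ((∑ f : T.edgeSet,
              (if e = f then (0 : ℚ) else 2 * (Md T e.1 f.1 : ℚ) + 2)) + 2 * (n - 1))
            - 2 := by
        intro e
        rw [Finset.sum_congr rfl fun f _ => hsplit e f, Finset.sum_sub_distrib,
          Finset.sum_ite_eq Finset.univ e (fun _ => (2 : ℚ))]
        simp only [Finset.mem_univ, if_pos]
        rw [show (fun f => m * ((if e = f then (0 : ℚ) else 2 * (Md T e.1 f.1 : ℚ) + 2) + 2))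
            = (fun f => m * (if e = f then (0 : ℚ) else 2 * (Md T e.1 f.1 : ℚ) + 2) + 2 * m)
            from funext fun f => by ring, Finset.sum_add_distrib, ← Finset.mul_sum,
          Finset.sum_const, Finset.card_univ, nsmul_eq_mul, hK]
        ring
      rw [Finset.sum_congr rfl fun e _ => h3 e, Finset.sum_sub_distrib, Finset.sum_const,
        Finset.card_univ, nsmul_eq_mul, hK]
      rw [show (fun e => m * ((∑ f : T.edgeSet,
          (if e = f then (0 : ℚ) else 2 * (Md T e.1 f.1 : ℚ) + 2)) + 2 * (n - 1)))
          = (fun e => m * (∑ f : T.edgeSet,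
          (if e = f then (0 : ℚ) else 2 * (Md T e.1 f.1 : ℚ) + 2)) + 2 * m * (n - 1))
          from funext fun e => by ring, Finset.sum_add_distrib, ← Finset.mul_sum,
        Finset.sum_const, Finset.card_univ, nsmul_eq_mul, hK]
      ring
    rw [this]
    ring
  have hA : ∑ u : V, (∑ v : V, 2 * (T.dist u v : ℚ)
      + (∑ e : T.edgeSet, (2 * (md T u (e : Sym2 V) : ℚ) + 1)
        + ∑ e : T.edgeSet, ∑ _i : Fin m, (2 * (md T u (e : Sym2 V) : ℚ) + 2)))
      = (4 + 2 * (m : ℚ)) * (∑ u : V, ∑ v : V, (T.dist u v : ℚ)) - n * (n - 1) := by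
    rw [Finset.sum_add_distrib, Finset.sum_add_distrib, B1, B2, B3]
    ring
  have hB : ∑ e : T.edgeSet, (∑ u : V, (2 * (md T u (e : Sym2 V) : ℚ) + 1)
      + ((∑ f : T.edgeSet, (if e = f then (0 : ℚ) else 2 * (Md T e.1 f.1 : ℚ) + 2))
        + ∑ f : T.edgeSet, ∑ _i : Fin m,
            (if e = f then (1 : ℚ) else 2 * (Md T e.1 f.1 : ℚ) + 3)))
      = (2 * (∑ u : V, ∑ v : V, (T.dist u v : ℚ)) - n * (n - 1))
        + ((2 * (∑ u : V, ∑ v : V, (T.dist u v : ℚ)) - n * (n - 1) - (n - 1) ^ 2 - (n - 1))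
          + (m : ℚ) * ((2 * (∑ u : V, ∑ v : V, (T.dist u v : ℚ))
              - n * (n - 1) - (n - 1) ^ 2 - (n - 1)) + (n - 1) ^ 2)) := by
    rw [Finset.sum_add_distrib, Finset.sum_add_distrib, B4, B6, B5]
  have hC : ∑ e : T.edgeSet, ∑ i : Fin m, (∑ u : V, (2 * (md T u (e : Sym2 V) : ℚ) + 2)
      + ((∑ f : T.edgeSet, (if e = f then (1 : ℚ) else 2 * (Md T e.1 f.1 : ℚ) + 3))
        + ∑ f : T.edgeSet, ∑ j : Fin m,
            (if e = f then (if i = j then (0 : ℚ) else 2)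
              else 2 * (Md T e.1 f.1 : ℚ) + 4)))
      = 2 * (m : ℚ) * (∑ u : V, ∑ v : V, (T.dist u v : ℚ))
        + ((m : ℚ) * ((2 * (∑ u : V, ∑ v : V, (T.dist u v : ℚ))
            - n * (n - 1) - (n - 1) ^ 2 - (n - 1)) + (n - 1) ^ 2)
          + ((m : ℚ) ^ 2 * ((2 * (∑ u : V, ∑ v : V, (T.dist u v : ℚ))
            - n * (n - 1) - (n - 1) ^ 2 - (n - 1)) + 2 * (n - 1) ^ 2)
            - 2 * (m : ℚ) * (n - 1))) := by
    have hsplit3 : ∀ e : T.edgeSet, ∑ i : Fin m,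
        (∑ u : V, (2 * (md T u (e : Sym2 V) : ℚ) + 2)
          + ((∑ f : T.edgeSet, (if e = f then (1 : ℚ) else 2 * (Md T e.1 f.1 : ℚ) + 3))
            + ∑ f : T.edgeSet, ∑ j : Fin m,
                (if e = f then (if i = j then (0 : ℚ) else 2)
                  else 2 * (Md T e.1 f.1 : ℚ) + 4)))
        = (∑ _i : Fin m, ∑ u : V, (2 * (md T u (e : Sym2 V) : ℚ) + 2))
          + ((∑ _i : Fin m, ∑ f : T.edgeSet,
              (if e = f then (1 : ℚ) else 2 * (Md T e.1 f.1 : ℚ) + 3))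
            + ∑ i : Fin m, ∑ f : T.edgeSet, ∑ j : Fin m,
                (if e = f then (if i = j then (0 : ℚ) else 2)
                  else 2 * (Md T e.1 f.1 : ℚ) + 4)) := by
      intro e
      exact Finset.sum_add_distrib.trans (congrArg (HAdd.hAdd _) Finset.sum_add_distrib)
    rw [Finset.sum_congr rfl fun e (_ : e ∈ Finset.univ) => hsplit3 e]
    rw [Finset.sum_add_distrib, Finset.sum_add_distrib, B7, B8, B9, B5]
  rw [hA, hB, hC]
  ring
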